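/- Fix m ∈ ℕ and real numbers s₁,…,s_m, t₁,…,t_m, and use the matrix conventions of the context. Then for every β = (β₁, β₂) ∈ ℕ², the matrix M_β := (ad E)^{β₁} ((ad (F − J))^{β₂+1} (E)) is strictly upper triangular with explicitly known first superdiagonal: (M_β)_{ij} = 0 whenever j ≤ i, and (M_β)_{i,i+1} = (−1)^{β₁+1} · s_{i+1}^{β₁+1} · t_{i+1}^{β₂} for every 0 ≤ i < m. In particular M_β agrees with the matrix having entries (−1)^{β₁+1} s_{p}^{β₁+1} t_{p}^{β₂} on the first superdiagonal up to a matrix vanishing on and below the first superdiagonal. -/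

import Mathlib

/-- The diagonal matrix `E` with `E_{ii} = s₁ + ⋯ + s_i` (so `E_{00} = 0`). -/
noncomputable def Emat (m : ℕ) (s : ℕ → ℝ) : Matrix (Fin (m + 1)) (Fin (m + 1)) ℝ :=
  Matrix.diagonal fun i => ∑ p ∈ Finset.Icc 1 (i : ℕ), s p

/-- The diagonal matrix `F` with `F_{ii} = t_{i+1} + ⋯ + t_m` (so `F_{mm} = 0`). -/
noncomputable def Fmat (m : ℕ) (t : ℕ → ℝ) : Matrix (Fin (m + 1)) (Fin (m + 1)) ℝ :=
  Matrix.diagonal fun i => ∑ p ∈ Finset.Icc ((i : ℕ) + 1) m, t p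

/-- The nilpotent Jordan matrix `J` with `J_{i,i+1} = 1` and all other entries `0`. -/
def Jmat (m : ℕ) : Matrix (Fin (m + 1)) (Fin (m + 1)) ℝ :=
  Matrix.of fun i j => if (j : ℕ) = (i : ℕ) + 1 then 1 else 0

/-- `M_β := (ad E)^{β₁} ((ad (F − J))^{β₂+1} (E))`, where `⁅A, B⁆ = A·B − B·A`. -/
noncomputable def Mmat (m : ℕ) (s t : ℕ → ℝ) (β₁ β₂ : ℕ) :
    Matrix (Fin (m + 1)) (Fin (m + 1)) ℝ :=
  (fun B => ⁅Emat m s, B⁆)^[β₁] ((fun B => ⁅Fmat m t - Jmat m, B⁆)^[β₂ + 1] (Emat m s))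

/-- `B` is strictly upper triangular and has first superdiagonal `g`. -/
def MGood (m : ℕ) (B : Matrix (Fin (m + 1)) (Fin (m + 1)) ℝ) (g : ℕ → ℝ) : Prop :=
  (∀ i j : Fin (m + 1), (j : ℕ) ≤ (i : ℕ) → B i j = 0) ∧
  (∀ i : Fin (m + 1), ∀ h : (i : ℕ) < m, B i ⟨(i : ℕ) + 1, Nat.succ_lt_succ h⟩ = g (i : ℕ))

lemma Jmul {m : ℕ} (B : Matrix (Fin (m + 1)) (Fin (m + 1)) ℝ) (i j : Fin (m + 1)) :
    (Jmat m * B) i j = if h : (i : ℕ) < m then B ⟨(i : ℕ) + 1, Nat.succ_lt_succ h⟩ j else 0 := by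
  simp only [Matrix.mul_apply, Jmat, Matrix.of_apply, ite_mul, one_mul, zero_mul]
  split
  · rename_i h
    rw [Finset.sum_eq_single (⟨(i : ℕ) + 1, by omega⟩ : Fin (m + 1))]
    · simp
    · intro k _ hk
      rw [if_neg]
      intro hc
      exact hk (Fin.ext hc)
    · simp
  · rename_i h
    apply Finset.sum_eq_zero
    intro k _
    rw [if_neg]
    omega
lemma mulJ {m : ℕ} (B : Matrix (Fin (m + 1)) (Fin (m + 1)) ℝ) (i j : Fin (m + 1)) :
    (B * Jmat m) i j = if h : 0 < (j : ℕ) then B i ⟨(j : ℕ) - 1, by omega⟩ else 0 := by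
  simp only [Matrix.mul_apply, Jmat, Matrix.of_apply, mul_ite, mul_one, mul_zero]
  split
  · rename_i h
    rw [Finset.sum_eq_single (⟨(j : ℕ) - 1, by omega⟩ : Fin (m + 1))]
    · rw [if_pos]; simp; omega
    · intro k _ hk
      rw [if_neg]
      intro hc
      exact hk (Fin.ext (by simp only [Fin.val_mk]; omega))
    · simp
  · rename_i h
    apply Finset.sum_eq_zero
    intro k _
    rw [if_neg]
    omega

lemma diag_lie {m : ℕ} (d : Fin (m + 1) → ℝ) (B : Matrix (Fin (m + 1)) (Fin (m + 1)) ℝ)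
    (i j : Fin (m + 1)) :
    (⁅Matrix.diagonal d, B⁆) i j = (d i - d j) * B i j := by
  simp only [Ring.lie_def, Matrix.sub_apply, Matrix.diagonal_mul, Matrix.mul_diagonal]
  ring

lemma stepE {m : ℕ} {s : ℕ → ℝ} {B : Matrix (Fin (m + 1)) (Fin (m + 1)) ℝ} {g : ℕ → ℝ}
    (hB : MGood m B g) : MGood m ⁅Emat m s, B⁆ (fun p => -s (p + 1) * g p) := by
  constructor
  · intro i j hji
    rw [Emat, diag_lie, hB.1 i j hji, mul_zero]
  · intro i h
    rw [Emat, diag_lie, hB.2 i h]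
    have : ∑ p ∈ Finset.Icc 1 ((i : ℕ) + 1), s p
        = (∑ p ∈ Finset.Icc 1 (i : ℕ), s p) + s ((i : ℕ) + 1) :=
      Finset.sum_Icc_succ_top (by omega) s
    simp only [Fin.val_mk] -- coercion of ⟨i+1,_⟩
    rw [this]
    ring

lemma Fdiag_diff {m : ℕ} (t : ℕ → ℝ) (i : ℕ) (h : i < m) :
    (∑ p ∈ Finset.Icc (i + 1) m, t p) - ∑ p ∈ Finset.Icc (i + 1 + 1) m, t p = t (i + 1) := by
  have : Finset.Icc (i + 1) m = insert (i + 1) (Finset.Icc (i + 2) m) := by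
    ext x; simp [Finset.mem_Icc]; omega
  rw [this, Finset.sum_insert (by simp [Finset.mem_Icc])]
  ring_nf

lemma stepFJ {m : ℕ} {t : ℕ → ℝ} {B : Matrix (Fin (m + 1)) (Fin (m + 1)) ℝ} {g : ℕ → ℝ}
    (hB : MGood m B g) : MGood m ⁅Fmat m t - Jmat m, B⁆ (fun p => t (p + 1) * g p) := by
  have hJ : ∀ i j : Fin (m + 1), (j : ℕ) ≤ (i : ℕ) + 1 → (⁅Jmat m, B⁆) i j = 0 := by
    intro i j hji
    simp only [Ring.lie_def, Matrix.sub_apply, Jmul, mulJ]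
    have h1 : ∀ h : (i : ℕ) < m, B ⟨(i : ℕ) + 1, Nat.succ_lt_succ h⟩ j = 0 := by
      intro h; exact hB.1 _ _ (by simp; omega)
    have h2 : ∀ h : 0 < (j : ℕ), B i ⟨(j : ℕ) - 1, by omega⟩ = 0 := by
      intro h; exact hB.1 _ _ (by simp; omega)
    split <;> split <;> simp_all
  have key : ∀ i j : Fin (m + 1), (⁅Fmat m t - Jmat m, B⁆) i j
      = (⁅Fmat m t, B⁆) i j - (⁅Jmat m, B⁆) i j := by
    intro i j
    simp only [Ring.lie_def, sub_mul, mul_sub, Matrix.sub_apply]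
    ring
  constructor
  · intro i j hji
    rw [key, hJ i j (by omega), Fmat, diag_lie, hB.1 i j hji]
    ring
  · intro i h
    rw [key, hJ i _ (by simp), Fmat, diag_lie, hB.2 i h]
    simp only [Fin.val_mk, sub_zero]
    rw [Fdiag_diff t (i : ℕ) h]

/-- `M_β` vanishes on and below the main diagonal, and its first
superdiagonal entries are `(M_β)_{i,i+1} = (−1)^{β₁+1} · s_{i+1}^{β₁+1} · t_{i+1}^{β₂}`. -/
theorem Mmat_entries (m : ℕ) (s t : ℕ → ℝ) (β₁ β₂ : ℕ) :
    (∀ i j : Fin (m + 1), (j : ℕ) ≤ (i : ℕ) → Mmat m s t β₁ β₂ i j = 0) ∧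
    (∀ i : Fin (m + 1), ∀ h : (i : ℕ) < m,
      Mmat m s t β₁ β₂ i ⟨(i : ℕ) + 1, by omega⟩ =
        (-1 : ℝ) ^ (β₁ + 1) * s ((i : ℕ) + 1) ^ (β₁ + 1) * t ((i : ℕ) + 1) ^ β₂) := by
  -- base case: ⁅F - J, E⁆
  have base : MGood m ⁅Fmat m t - Jmat m, Emat m s⁆ (fun p => -s (p + 1)) := by
    have key : ∀ i j : Fin (m + 1), (⁅Fmat m t - Jmat m, Emat m s⁆) i j
        = - (⁅Jmat m, Emat m s⁆) i j := by
      intro i j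
      simp only [Ring.lie_def, sub_mul, mul_sub, Matrix.sub_apply]
      have : ⁅Fmat m t, Emat m s⁆ = 0 := by
        rw [Ring.lie_def, Fmat, Emat, Matrix.diagonal_mul_diagonal,
          Matrix.diagonal_mul_diagonal]
        simp [mul_comm]
      have h3 := congrFun (congrFun this i) j
      simp only [Ring.lie_def, Matrix.sub_apply, Matrix.zero_apply] at h3
      linarith
    constructor
    · intro i j hji
      rw [key]
      simp only [Ring.lie_def, Matrix.sub_apply, Jmul, mulJ]
      have h1 : ∀ h : (i : ℕ) < m, Emat m s ⟨(i : ℕ) + 1, by omega⟩ j = 0 := by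
        intro h
        rw [Emat, Matrix.diagonal_apply_ne _ (by simp [Fin.ext_iff]; omega)]
      have h2 : ∀ h : 0 < (j : ℕ), Emat m s i ⟨(j : ℕ) - 1, by omega⟩ = 0 := by
        intro h
        rw [Emat, Matrix.diagonal_apply_ne _ (by simp [Fin.ext_iff]; omega)]
      split <;> split <;> simp_all
    · intro i h
      rw [key]
      simp only [Ring.lie_def, Matrix.sub_apply, Jmul, mulJ]
      rw [dif_pos h, dif_pos (by simp : 0 < (((⟨(i:ℕ)+1, by omega⟩ : Fin (m+1))) : ℕ))]
      simp only [Fin.val_mk, Nat.add_sub_cancel]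
      rw [Emat]
      simp only [Fin.eta, Matrix.diagonal_apply_eq, Fin.val_mk]
      have : ∑ p ∈ Finset.Icc 1 ((i : ℕ) + 1), s p
          = (∑ p ∈ Finset.Icc 1 (i : ℕ), s p) + s ((i : ℕ) + 1) :=
        Finset.sum_Icc_succ_top (by omega) s
      rw [this]
      ring
  have iterFJ : ∀ k : ℕ, MGood m ((fun B => ⁅Fmat m t - Jmat m, B⁆)^[k + 1] (Emat m s))
      (fun p => t (p + 1) ^ k * (-s (p + 1))) := by
    intro k
    induction k with
    | zero => simpa using base
    | succ n ih =>
      rw [Function.iterate_succ_apply']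
      have := stepFJ (t := t) ih
      refine ⟨this.1, fun i h => ?_⟩
      rw [this.2 i h]
      ring
  have iterE : ∀ k : ℕ, MGood m (Mmat m s t k β₂)
      (fun p => (-s (p + 1)) ^ k * (t (p + 1) ^ β₂ * (-s (p + 1)))) := by
    intro k
    induction k with
    | zero => simpa [Mmat] using iterFJ β₂
    | succ n ih =>
      have : Mmat m s t (n + 1) β₂ = ⁅Emat m s, Mmat m s t n β₂⁆ := by
        rw [Mmat, Mmat, Function.iterate_succ_apply']
      rw [this]
      have h2 := stepE (s := s) ih
      refine ⟨h2.1, fun i h => ?_⟩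
      rw [h2.2 i h]
      ring
  refine ⟨(iterE β₁).1, fun i h => ?_⟩
  rw [(iterE β₁).2 i h]
  ring
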